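/- Let A ∈ H[t] with deg A ≥ 1, let M ∈ ℝ[t] be a monic irreducible quadratic dividing N(A), and write A = Q·M + R by division with remainder. If R ≠ 0 then deg R = 1; the case deg R = 0 cannot occur. -/

import Mathlib

open Polynomial

def qI : Quaternion ℝ := ⟨0, 1, 0, 0⟩
def qJ : Quaternion ℝ := ⟨0, 0, 1, 0⟩
def qK : Quaternion ℝ := ⟨0, 0, 0, 1⟩

noncomputable def toQuatPoly : Polynomial ℝ →+* Polynomial (Quaternion ℝ) :=
  Polynomial.mapRingHom (algebraMap ℝ (Quaternion ℝ))

namespace QuatAux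

/-- Componentwise `C` as a ring hom `ℍ → ℍ[ℝ[X]]`. -/
noncomputable def qmap : Quaternion ℝ →+* Quaternion (Polynomial ℝ) where
  toFun a := ⟨C a.re, C a.imI, C a.imJ, C a.imK⟩
  map_one' := by
    ext : 1
    · exact map_one C
    all_goals exact map_zero C
  map_zero' := by ext : 1 <;> exact map_zero C
  map_add' a b := by ext : 1 <;> exact map_add C _ _
  map_mul' a b := by
    ext : 1 <;> simp [Quaternion.re_mul, Quaternion.imI_mul, Quaternion.imJ_mul,
      Quaternion.imK_mul]
    · exact (Quaternion.re_mul (⟨C a.re, C a.imI, C a.imJ, C a.imK⟩ : Quaternion (Polynomial ℝ))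
        ⟨C b.re, C b.imI, C b.imJ, C b.imK⟩).symm
    · exact (Quaternion.imI_mul (⟨C a.re, C a.imI, C a.imJ, C a.imK⟩ : Quaternion (Polynomial ℝ))
        ⟨C b.re, C b.imI, C b.imJ, C b.imK⟩).symm
    · exact (Quaternion.imJ_mul (⟨C a.re, C a.imI, C a.imJ, C a.imK⟩ : Quaternion (Polynomial ℝ))
        ⟨C b.re, C b.imI, C b.imJ, C b.imK⟩).symm
    · exact (Quaternion.imK_mul (⟨C a.re, C a.imI, C a.imJ, C a.imK⟩ : Quaternion (Polynomial ℝ))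
        ⟨C b.re, C b.imI, C b.imJ, C b.imK⟩).symm

lemma qmap_re (a : Quaternion ℝ) : (qmap a).re = C a.re := rfl
lemma qmap_imI (a : Quaternion ℝ) : (qmap a).imI = C a.imI := rfl
lemma qmap_imJ (a : Quaternion ℝ) : (qmap a).imJ = C a.imJ := rfl
lemma qmap_imK (a : Quaternion ℝ) : (qmap a).imK = C a.imK := rfl

lemma qstar_add (a b : Quaternion (Polynomial ℝ)) : star (a + b) = star a + star b := by
  apply Quaternion.ext <;> simp [add_comm]

/-- Evaluation of quaternion polynomials, landing in quaternions over `ℝ[X]`. -/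
noncomputable def phi : Polynomial (Quaternion ℝ) →+* Quaternion (Polynomial ℝ) :=
  eval₂RingHom' qmap ((X : Polynomial ℝ) : Quaternion (Polynomial ℝ))
    (fun a => (Quaternion.coe_commute _ _).symm)

lemma phi_C (q : Quaternion ℝ) : phi (C q) = qmap q := eval₂_C _ _

lemma phi_toQuatPoly (P : Polynomial ℝ) :
    phi (toQuatPoly P) = (P : Quaternion (Polynomial ℝ)) := by
  have h : phi.comp toQuatPoly = algebraMap (Polynomial ℝ) (Quaternion (Polynomial ℝ)) := by
    apply Polynomial.ringHom_ext
    · intro a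
      simp only [RingHom.comp_apply, toQuatPoly, coe_mapRingHom, map_C, phi_C]
      rw [Quaternion.algebraMap_def, Quaternion.algebraMap_def]
      ext : 1 <;> simp [qmap_re, qmap_imI, qmap_imJ, qmap_imK]
    · simp only [RingHom.comp_apply, toQuatPoly, coe_mapRingHom, map_X]
      show eval₂ qmap _ X = _
      rw [eval₂_X, Quaternion.algebraMap_def]
  calc phi (toQuatPoly P) = (phi.comp toQuatPoly) P := rfl
    _ = _ := by rw [h, Quaternion.algebraMap_def]

end QuatAux

/-- Let `A ∈ ℍ[t]` with `deg A ≥ 1`, let `M ∈ ℝ[t]` be a monic irreducible quadratic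
dividing the norm polynomial `N(A)`, and write `A = Q·M + R` by division with
remainder.  If `R ≠ 0` then `deg R = 1`; the case `deg R = 0` cannot occur. -/
theorem remainder_mod_irreducible_quadratic_not_constant
    (A₀ A₁ A₂ A₃ : Polynomial ℝ) (A Q R : Polynomial (Quaternion ℝ))
    (hA : A = toQuatPoly A₀ + toQuatPoly A₁ * C qI + toQuatPoly A₂ * C qJ
        + toQuatPoly A₃ * C qK)
    (hdeg : 1 ≤ A.degree)
    (M : Polynomial ℝ) (hmonic : M.Monic) (hirr : Irreducible M) (hM2 : M.degree = 2)
    (hdvd : M ∣ A₀ ^ 2 + A₁ ^ 2 + A₂ ^ 2 + A₃ ^ 2)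
    (hdivision : A = Q * toQuatPoly M + R) (hRdeg : R.degree < 2) :
    R ≠ 0 → R.degree = 1 := by
  classical
  intro hR0
  open QuatAux in
  -- rule out the constant case
  have hcase : R.natDegree ≠ 0 := by
    intro hnd
    -- R = C r with r ≠ 0
    have hRC : R = C (R.coeff 0) := Polynomial.eq_C_of_natDegree_eq_zero hnd
    set r : Quaternion ℝ := R.coeff 0 with hr
    have hrne : r ≠ 0 := fun h => hR0 (by rw [hRC, h, map_zero])
    -- move everything to ℍ[ℝ[X]]
    set a := phi A with ha
    set q' := phi Q with hq'
    set r' := phi R with hr'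
    have hdiv' : a = q' * (M : Quaternion (Polynomial ℝ)) + r' := by
      rw [ha, hdivision, RingHom.map_add, RingHom.map_mul, phi_toQuatPoly]
    -- norm of a
    have hacomp : a = ⟨A₀, A₁, A₂, A₃⟩ := by
      rw [ha, hA]
      simp only [RingHom.map_add, RingHom.map_mul, phi_C, phi_toQuatPoly]
      ext : 1 <;>
        simp [qmap_re, qmap_imI, qmap_imJ, qmap_imK, Quaternion.re_mul, Quaternion.imI_mul,
          Quaternion.imJ_mul, Quaternion.imK_mul] <;> simp [qI, qJ, qK]
    have hnorm : star a * a = ((A₀ ^ 2 + A₁ ^ 2 + A₂ ^ 2 + A₃ ^ 2 : Polynomial ℝ) :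
        Quaternion (Polynomial ℝ)) := by
      rw [Quaternion.star_mul_self]
      congr 1
      rw [Quaternion.normSq_def', hacomp]
    -- key identity
    have hkey : star a * a
        = (M : Quaternion (Polynomial ℝ)) *
            (star q' * q' * (M : Quaternion (Polynomial ℝ)) + star q' * r' + star r' * q')
          + star r' * r' := by
      rw [hdiv']
      have hcomm : star r' * (q' * (M : Quaternion (Polynomial ℝ)))
          = (M : Quaternion (Polynomial ℝ)) * (star r' * q') := by
        rw [← Quaternion.coe_commutes, ← mul_assoc, ← Quaternion.coe_commutes, mul_assoc]
      simp only [qstar_add, star_mul, Quaternion.star_coe, add_mul, mul_add, hcomm]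
      simp only [mul_assoc, add_assoc]
      abel
    -- divisibility of star r' * r' by M
    obtain ⟨c, hc⟩ := hdvd
    have hdvd' : (M : Quaternion (Polynomial ℝ)) ∣ star r' * r' := by
      refine ⟨(c : Quaternion (Polynomial ℝ)) -
        (star q' * q' * (M : Quaternion (Polynomial ℝ)) + star q' * r' + star r' * q'), ?_⟩
      have : star r' * r' = star a * a - (M : Quaternion (Polynomial ℝ)) *
          (star q' * q' * (M : Quaternion (Polynomial ℝ)) + star q' * r' + star r' * q') := by
        rw [hkey]; abel
      rw [this, hnorm, hc, mul_sub, Quaternion.coe_mul]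
    -- compute star r' * r' for constant R
    have hrr : star r' * r' = ((C (Quaternion.normSq r) : Polynomial ℝ) :
        Quaternion (Polynomial ℝ)) := by
      have : r' = qmap r := by rw [hr', hRC, phi_C]
      rw [this, Quaternion.star_mul_self]
      refine congrArg Quaternion.coe ?_
      rw [Quaternion.normSq_def', Quaternion.normSq_def']
      show (C r.re) ^ 2 + (C r.imI) ^ 2 + (C r.imJ) ^ 2 + (C r.imK) ^ 2 = _
      push_cast [← C_pow, ← C_add]
      ring_nf
    rw [hrr] at hdvd'
    obtain ⟨x, hx⟩ := hdvd'
    have hre : C (Quaternion.normSq r) = M * x.re := by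
      have := congrArg QuaternionAlgebra.re hx
      simpa [Quaternion.re_mul] using this
    have hMdvdC : M ∣ C (Quaternion.normSq r) := ⟨x.re, hre⟩
    have hsne : Quaternion.normSq r ≠ 0 := Quaternion.normSq_ne_zero.mpr hrne
    have hCne : C (Quaternion.normSq r) ≠ 0 := by simpa using hsne
    have hdle := Polynomial.degree_le_of_dvd hMdvdC hCne
    rw [hM2, Polynomial.degree_C hsne] at hdle
    exact absurd hdle (by norm_num)
  -- conclude degree = 1
  have hnd2 : R.natDegree < 2 := by
    rw [Polynomial.natDegree_lt_iff_degree_lt hR0]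
    exact_mod_cast hRdeg
  have h1 : R.natDegree = 1 := by omega
  rw [Polynomial.degree_eq_natDegree hR0, h1]
  rfl
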